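/- Let M be a 2×2 unitary matrix analytic in a real parameter λ on an open segment of the unit circle, with eigenvalues ρ₁, ρ₂, and let λ₀ be in the segment. Then M(λ₀) is a scalar multiple of the identity and the trace-free part of M'(λ₀) vanishes if and only if ρ₁(λ₀) = ρ₂(λ₀) and ρ₁'(λ₀) = ρ₂'(λ₀). -/

import Mathlib

open Matrix

/-- The entrywise derivative of a matrix-valued function of a real parameter. -/
noncomputable def matDeriv (M : ℝ → Matrix (Fin 2) (Fin 2) ℂ) (t : ℝ) :
    Matrix (Fin 2) (Fin 2) ℂ :=
  Matrix.of fun i j => deriv (fun s => M s i j) t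

namespace Stmt0Aux

lemma analyticAt_deriv {f : ℝ → ℂ} {x : ℝ} (h : AnalyticAt ℝ f x) :
    AnalyticAt ℝ (deriv f) x := by
  obtain ⟨s, hs, hf⟩ := h.exists_mem_nhds_analyticOnNhd
  exact hf.deriv x (mem_of_mem_nhds hs)

lemma deriv2_mul {u v : ℝ → ℂ} {x : ℝ} (hu : AnalyticAt ℝ u x) (hv : AnalyticAt ℝ v x)
    (hu0 : u x = 0) (hv0 : v x = 0) :
    deriv (deriv (fun t => u t * v t)) x = 2 * (deriv u x * deriv v x) := by
  have h1 : deriv (fun t => u t * v t) =ᶠ[nhds x]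
      fun t => deriv u t * v t + u t * deriv v t := by
    filter_upwards [hu.eventually_analyticAt, hv.eventually_analyticAt] with t ht1 ht2
    exact deriv_mul ht1.differentiableAt ht2.differentiableAt
  have Hu : HasDerivAt u (deriv u x) x := hu.differentiableAt.hasDerivAt
  have Hv : HasDerivAt v (deriv v x) x := hv.differentiableAt.hasDerivAt
  have Hu' : HasDerivAt (deriv u) (deriv (deriv u) x) x :=
    (analyticAt_deriv hu).differentiableAt.hasDerivAt
  have Hv' : HasDerivAt (deriv v) (deriv (deriv v) x) x :=
    (analyticAt_deriv hv).differentiableAt.hasDerivAt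
  have H : HasDerivAt (fun t => deriv u t * v t + u t * deriv v t)
      ((deriv (deriv u) x * v x + deriv u x * deriv v x) +
        (deriv u x * deriv v x + u x * deriv (deriv v) x)) x := (Hu'.mul Hv).add (Hu.mul Hv')
  rw [h1.deriv_eq, H.deriv, hu0, hv0]
  ring

lemma deriv2_add {u v : ℝ → ℂ} {x : ℝ} (hu : AnalyticAt ℝ u x) (hv : AnalyticAt ℝ v x) :
    deriv (deriv (fun t => u t + v t)) x = deriv (deriv u) x + deriv (deriv v) x := by
  have h1 : deriv (fun t => u t + v t) =ᶠ[nhds x] fun t => deriv u t + deriv v t := by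
    filter_upwards [hu.eventually_analyticAt, hv.eventually_analyticAt] with t ht1 ht2
    exact deriv_add ht1.differentiableAt ht2.differentiableAt
  rw [h1.deriv_eq]
  exact deriv_add (analyticAt_deriv hu).differentiableAt (analyticAt_deriv hv).differentiableAt

lemma hasDerivAt_conj {f : ℝ → ℂ} {f' : ℂ} {x : ℝ} (hf : HasDerivAt f f' x) :
    HasDerivAt (fun t => (starRingEnd ℂ) (f t)) ((starRingEnd ℂ) f') x := by
  have := (Complex.conjCLE.hasFDerivAt (x := f x)).comp_hasDerivAt x hf
  exact this

lemma eq_one_of_re {z : ℂ} (h1 : Complex.normSq z ≤ 1) (h2 : z.re = 1) : z = 1 := by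
  have hn : Complex.normSq z = z.re * z.re + z.im * z.im := Complex.normSq_apply z
  have him : z.im = 0 := by nlinarith [sq_nonneg z.im]
  exact Complex.ext (by simp [h2]) (by simp [him])

lemma unitary_eq_smul_one {U : Matrix (Fin 2) (Fin 2) ℂ}
    (hU : U ∈ Matrix.unitaryGroup (Fin 2) ℂ)
    {c : ℂ} (htr : U 0 0 + U 1 1 = 2 * c) (hdet : U.det = c * c) :
    U = c • (1 : Matrix (Fin 2) (Fin 2) ℂ) := by
  have hU' : star U * U = 1 := Matrix.mem_unitaryGroup_iff'.mp hU
  have hdet1 : (starRingEnd ℂ) (U.det) * U.det = 1 := by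
    have : (star U * U).det = (1 : Matrix (Fin 2) (Fin 2) ℂ).det := by rw [hU']
    simpa [Matrix.star_eq_conjTranspose, Matrix.det_conjTranspose] using this
  have hnsq : Complex.normSq c = 1 := by
    have h2 : ((Complex.normSq c : ℂ)) ^ 2 = 1 := by
      rw [hdet] at hdet1
      have : (starRingEnd ℂ) c * c = (Complex.normSq c : ℂ) := by
        rw [mul_comm]; exact Complex.mul_conj c
      calc ((Complex.normSq c : ℂ)) ^ 2 = ((starRingEnd ℂ) c * c) * ((starRingEnd ℂ) c * c) := by
            rw [this]; ring
        _ = (starRingEnd ℂ) (c * c) * (c * c) := by rw [RingHom.map_mul]; ring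
        _ = 1 := hdet1
    have h3 : (Complex.normSq c) ^ 2 = 1 := by exact_mod_cast h2
    nlinarith [Complex.normSq_nonneg c]
  have hcc : (starRingEnd ℂ) c * c = 1 := by
    rw [mul_comm, Complex.mul_conj, hnsq]; norm_num
  have hent : ∀ i j : Fin 2,
      (starRingEnd ℂ) (U 0 i) * U 0 j + (starRingEnd ℂ) (U 1 i) * U 1 j
        = (1 : Matrix (Fin 2) (Fin 2) ℂ) i j := by
    intro i j
    have h2 : (star U * U) i j = (1 : Matrix (Fin 2) (Fin 2) ℂ) i j := by rw [hU']
    simpa [Matrix.mul_apply, Fin.sum_univ_two, Matrix.star_eq_conjTranspose,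
      Matrix.conjTranspose_apply, Complex.star_def] using h2
  have h00 : Complex.normSq (U 0 0) + Complex.normSq (U 1 0) = 1 := by
    have := hent 0 0
    simp only [Matrix.one_apply_eq] at this
    have h' : ((Complex.normSq (U 0 0) : ℂ)) + ((Complex.normSq (U 1 0) : ℂ)) = 1 := by
      rw [← this]; rw [mul_comm ((starRingEnd ℂ) (U 0 0)), mul_comm ((starRingEnd ℂ) (U 1 0)),
        Complex.mul_conj, Complex.mul_conj]
    exact_mod_cast h'
  have h11 : Complex.normSq (U 0 1) + Complex.normSq (U 1 1) = 1 := by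
    have := hent 1 1
    simp only [Matrix.one_apply_eq] at this
    have h' : ((Complex.normSq (U 0 1) : ℂ)) + ((Complex.normSq (U 1 1) : ℂ)) = 1 := by
      rw [← this]; rw [mul_comm ((starRingEnd ℂ) (U 0 1)), mul_comm ((starRingEnd ℂ) (U 1 1)),
        Complex.mul_conj, Complex.mul_conj]
    exact_mod_cast h'
  set a : ℂ := (starRingEnd ℂ) c * U 0 0 with ha
  set b : ℂ := (starRingEnd ℂ) c * U 1 1 with hb
  have hab : a + b = 2 := by
    have h1 : a + b = (starRingEnd ℂ) c * (U 0 0 + U 1 1) := by rw [ha, hb]; ring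
    have h2 : (starRingEnd ℂ) c * (2 * c) = 2 * ((starRingEnd ℂ) c * c) := by ring
    rw [h1, htr, h2, hcc]; norm_num
  have hna : Complex.normSq a ≤ 1 := by
    rw [ha, Complex.normSq_mul, Complex.normSq_conj, hnsq, one_mul]
    nlinarith [Complex.normSq_nonneg (U 1 0)]
  have hnb : Complex.normSq b ≤ 1 := by
    rw [hb, Complex.normSq_mul, Complex.normSq_conj, hnsq, one_mul]
    nlinarith [Complex.normSq_nonneg (U 0 1)]
  have hare : a.re = 1 ∧ b.re = 1 := by
    have hsum : a.re + b.re = 2 := by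
      have := congrArg Complex.re hab; simpa using this
    have h1 : a.re * a.re ≤ 1 := by
      have := Complex.normSq_apply a; nlinarith [sq_nonneg a.im]
    have h2 : b.re * b.re ≤ 1 := by
      have := Complex.normSq_apply b; nlinarith [sq_nonneg b.im]
    constructor <;> nlinarith
  have haa : a = 1 := eq_one_of_re hna hare.1
  have hbb : b = 1 := eq_one_of_re hnb hare.2
  have hU00 : U 0 0 = c := by
    have : c * a = c * 1 := by rw [haa]
    rw [ha] at this
    rwa [← mul_assoc, mul_comm c, hcc, one_mul, mul_one] at this
  have hU11 : U 1 1 = c := by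
    have : c * b = c * 1 := by rw [hbb]
    rw [hb] at this
    rwa [← mul_assoc, mul_comm c, hcc, one_mul, mul_one] at this
  have hU10 : U 1 0 = 0 := by
    have : Complex.normSq (U 1 0) = 0 := by rw [hU00] at h00; rw [hnsq] at h00; linarith
    exact Complex.normSq_eq_zero.mp this
  have hU01 : U 0 1 = 0 := by
    have : Complex.normSq (U 0 1) = 0 := by rw [hU11] at h11; rw [hnsq] at h11; linarith
    exact Complex.normSq_eq_zero.mp this
  ext i j
  fin_cases i <;> fin_cases j <;>
    simp [hU00, hU01, hU10, hU11, Matrix.one_apply]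

lemma skew_alg {x y z : ℂ} (hx : (starRingEnd ℂ) x + x = 0)
    (hzy : z + (starRingEnd ℂ) y = 0) (f4 : x * x + 4 * (y * z) = 0) :
    x = 0 ∧ y = 0 ∧ z = 0 := by
  have hxy : x * x = 4 * (y * (starRingEnd ℂ) y) := by
    linear_combination f4 - 4 * y * hzy
  rw [Complex.mul_conj] at hxy
  have hxre : x.re = 0 := by
    have := congrArg Complex.re hx
    simp only [Complex.add_re, Complex.conj_re, Complex.zero_re] at this
    linarith
  have hre : x.re * x.re - x.im * x.im = 4 * Complex.normSq y := by
    have := congrArg Complex.re hxy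
    simpa [Complex.mul_re] using this
  have hy0 : Complex.normSq y = 0 := by nlinarith [Complex.normSq_nonneg y, sq_nonneg x.im]
  have hyz : y = 0 := Complex.normSq_eq_zero.mp hy0
  have hz0 : z = 0 := by rw [hyz] at hzy; simpa using hzy
  have hxim : x.im = 0 := by nlinarith
  exact ⟨Complex.ext (by simp [hxre]) (by simp [hxim]), hyz, hz0⟩

end Stmt0Aux

open Stmt0Aux in
/-- For an analytic family of 2×2 unitary matrices `M` on an open
segment `γ` of the circle parameter with analytic eigenvalue branches `ρ₁, ρ₂`,
and `l₀ ∈ γ`: `M l₀` is a scalar multiple of the identity and the trace-free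
part of `M' l₀` vanishes iff `ρ₁ l₀ = ρ₂ l₀` and `ρ₁' l₀ = ρ₂' l₀`. -/
theorem stmt0 (γ : Set ℝ) (hγ : IsOpen γ)
    (M : ℝ → Matrix (Fin 2) (Fin 2) ℂ) (ρ₁ ρ₂ : ℝ → ℂ) (l₀ : ℝ) (hl₀ : l₀ ∈ γ)
    (hM : ∀ t ∈ γ, ∀ i j, AnalyticAt ℝ (fun s => M s i j) t)
    (hρ₁ : ∀ t ∈ γ, AnalyticAt ℝ ρ₁ t) (hρ₂ : ∀ t ∈ γ, AnalyticAt ℝ ρ₂ t)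
    (hU : ∀ t ∈ γ, M t ∈ Matrix.unitaryGroup (Fin 2) ℂ)
    (heig : ∀ t ∈ γ, (M t).charpoly.roots = {ρ₁ t, ρ₂ t}) :
    ((∃ c : ℂ, M l₀ = c • (1 : Matrix (Fin 2) (Fin 2) ℂ)) ∧
        matDeriv M l₀ - ((Matrix.trace (matDeriv M l₀)) / 2) •
          (1 : Matrix (Fin 2) (Fin 2) ℂ) = 0) ↔
      (ρ₁ l₀ = ρ₂ l₀ ∧ deriv ρ₁ l₀ = deriv ρ₂ l₀) := by
  have hγn : γ ∈ nhds l₀ := hγ.mem_nhds hl₀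
  have hm : ∀ i j, AnalyticAt ℝ (fun s => M s i j) l₀ := hM l₀ hl₀
  have hTr : ∀ t ∈ γ, M t 0 0 + M t 1 1 = ρ₁ t + ρ₂ t := by
    intro t ht
    have h := Matrix.trace_eq_sum_roots_charpoly (M t)
    rw [heig t ht, Matrix.trace_fin_two] at h
    simpa using h
  have hDet : ∀ t ∈ γ, M t 0 0 * M t 1 1 - M t 0 1 * M t 1 0 = ρ₁ t * ρ₂ t := by
    intro t ht
    have h := Matrix.det_eq_prod_roots_charpoly (M t)
    rw [heig t ht, Matrix.det_fin_two] at h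
    simpa using h
  have hFG : (fun t => (ρ₁ t - ρ₂ t) * (ρ₁ t - ρ₂ t)) =ᶠ[nhds l₀]
      (fun t => ((M t 0 0 - M t 1 1) * (M t 0 0 - M t 1 1) +
        (2 * M t 0 1) * (2 * M t 1 0))) := by
    filter_upwards [hγn] with t ht
    have e1 := hTr t ht
    have e2 := hDet t ht
    linear_combination (-(ρ₁ t + ρ₂ t + M t 0 0 + M t 1 1)) * e1 + 4 * e2
  -- key identity, available once we know `M l₀` is scalar
  have key : ∀ c : ℂ, M l₀ = c • (1 : Matrix (Fin 2) (Fin 2) ℂ) →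
      ρ₁ l₀ = ρ₂ l₀ ∧
      (deriv ρ₁ l₀ - deriv ρ₂ l₀) * (deriv ρ₁ l₀ - deriv ρ₂ l₀) =
        (deriv (fun s => M s 0 0) l₀ - deriv (fun s => M s 1 1) l₀) *
          (deriv (fun s => M s 0 0) l₀ - deriv (fun s => M s 1 1) l₀) +
        4 * (deriv (fun s => M s 0 1) l₀ * deriv (fun s => M s 1 0) l₀) := by
    intro c hsc
    have hc00 : M l₀ 0 0 = c := by rw [hsc]; simp [Matrix.one_apply]
    have hc11 : M l₀ 1 1 = c := by rw [hsc]; simp [Matrix.one_apply]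
    have hc01 : M l₀ 0 1 = 0 := by rw [hsc]; simp [Matrix.one_apply]
    have hc10 : M l₀ 1 0 = 0 := by rw [hsc]; simp [Matrix.one_apply]
    have hu : AnalyticAt ℝ (fun t => ρ₁ t - ρ₂ t) l₀ := (hρ₁ l₀ hl₀).sub (hρ₂ l₀ hl₀)
    have hg1 : AnalyticAt ℝ (fun t => M t 0 0 - M t 1 1) l₀ := (hm 0 0).sub (hm 1 1)
    have hg2 : AnalyticAt ℝ (fun t => 2 * M t 0 1) l₀ := analyticAt_const.mul (hm 0 1)
    have hg3 : AnalyticAt ℝ (fun t => 2 * M t 1 0) l₀ := analyticAt_const.mul (hm 1 0)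
    have hval : (ρ₁ l₀ - ρ₂ l₀) * (ρ₁ l₀ - ρ₂ l₀) =
        ((M l₀ 0 0 - M l₀ 1 1) * (M l₀ 0 0 - M l₀ 1 1) +
          (2 * M l₀ 0 1) * (2 * M l₀ 1 0)) := hFG.self_of_nhds
    rw [hc00, hc11, hc01, hc10] at hval
    have hρ0 : ρ₁ l₀ - ρ₂ l₀ = 0 := by
      apply mul_self_eq_zero.mp; rw [hval]; ring
    refine ⟨sub_eq_zero.mp hρ0, ?_⟩
    have hg10 : (fun t => M t 0 0 - M t 1 1) l₀ = 0 := by simp only []; rw [hc00, hc11]; ring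
    have hg20 : (fun t => 2 * M t 0 1) l₀ = 0 := by simp only []; rw [hc01]; ring
    have hg30 : (fun t => 2 * M t 1 0) l₀ = 0 := by simp only []; rw [hc10]; ring
    have hu0 : (fun t => ρ₁ t - ρ₂ t) l₀ = 0 := hρ0
    have hL := deriv2_mul hu hu hu0 hu0
    have heq2 := (hFG.deriv).deriv_eq
    rw [hL] at heq2
    rw [deriv2_add (hg1.fun_mul hg1) (hg2.fun_mul hg3)] at heq2
    rw [deriv2_mul hg1 hg1 hg10 hg10, deriv2_mul hg2 hg3 hg20 hg30] at heq2
    have d1 : deriv (fun t => ρ₁ t - ρ₂ t) l₀ = deriv ρ₁ l₀ - deriv ρ₂ l₀ :=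
      deriv_fun_sub (hρ₁ l₀ hl₀).differentiableAt (hρ₂ l₀ hl₀).differentiableAt
    have d2 : deriv (fun t => M t 0 0 - M t 1 1) l₀ =
        deriv (fun s => M s 0 0) l₀ - deriv (fun s => M s 1 1) l₀ :=
      deriv_fun_sub (hm 0 0).differentiableAt (hm 1 1).differentiableAt
    have d3 : deriv (fun t => 2 * M t 0 1) l₀ = 2 * deriv (fun s => M s 0 1) l₀ :=
      deriv_const_mul 2 (hm 0 1).differentiableAt
    have d4 : deriv (fun t => 2 * M t 1 0) l₀ = 2 * deriv (fun s => M s 1 0) l₀ :=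
      deriv_const_mul 2 (hm 1 0).differentiableAt
    rw [d1, d2, d3, d4] at heq2
    linear_combination heq2 / 2
  constructor
  · rintro ⟨⟨c, hsc⟩, htf⟩
    obtain ⟨hρeq, hkey⟩ := key c hsc
    refine ⟨hρeq, ?_⟩
    have h' : matDeriv M l₀ =
        ((Matrix.trace (matDeriv M l₀)) / 2) • (1 : Matrix (Fin 2) (Fin 2) ℂ) :=
      sub_eq_zero.mp htf
    have e01 : deriv (fun s => M s 0 1) l₀ = 0 := by
      have h2 : matDeriv M l₀ 0 1 =
          (((Matrix.trace (matDeriv M l₀)) / 2) • (1 : Matrix (Fin 2) (Fin 2) ℂ)) 0 1 := by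
        rw [← h']
      simpa [matDeriv, Matrix.one_apply] using h2
    have e10 : deriv (fun s => M s 1 0) l₀ = 0 := by
      have h2 : matDeriv M l₀ 1 0 =
          (((Matrix.trace (matDeriv M l₀)) / 2) • (1 : Matrix (Fin 2) (Fin 2) ℂ)) 1 0 := by
        rw [← h']
      simpa [matDeriv, Matrix.one_apply] using h2
    have e00 : deriv (fun s => M s 0 0) l₀ = (Matrix.trace (matDeriv M l₀)) / 2 := by
      have h2 : matDeriv M l₀ 0 0 =
          (((Matrix.trace (matDeriv M l₀)) / 2) • (1 : Matrix (Fin 2) (Fin 2) ℂ)) 0 0 := by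
        rw [← h']
      simpa [matDeriv, Matrix.one_apply] using h2
    have e11 : deriv (fun s => M s 1 1) l₀ = (Matrix.trace (matDeriv M l₀)) / 2 := by
      have h2 : matDeriv M l₀ 1 1 =
          (((Matrix.trace (matDeriv M l₀)) / 2) • (1 : Matrix (Fin 2) (Fin 2) ℂ)) 1 1 := by
        rw [← h']
      simpa [matDeriv, Matrix.one_apply] using h2
    have : (deriv ρ₁ l₀ - deriv ρ₂ l₀) * (deriv ρ₁ l₀ - deriv ρ₂ l₀) = 0 := by
      rw [hkey, e00, e01, e10, e11]; ring
    have := mul_self_eq_zero.mp this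
    exact sub_eq_zero.mp this
  · rintro ⟨h0, h1⟩
    have htr2 : M l₀ 0 0 + M l₀ 1 1 = 2 * ρ₁ l₀ := by
      rw [hTr l₀ hl₀, ← h0]; ring
    have hdet2 : (M l₀).det = ρ₁ l₀ * ρ₁ l₀ := by
      rw [Matrix.det_fin_two, hDet l₀ hl₀, ← h0]
    have hsc := unitary_eq_smul_one (hU l₀ hl₀) htr2 hdet2
    obtain ⟨hρeq, hkey⟩ := key (ρ₁ l₀) hsc
    refine ⟨⟨ρ₁ l₀, hsc⟩, ?_⟩
    set c : ℂ := ρ₁ l₀ with hcdef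
    have hc00 : M l₀ 0 0 = c := by rw [hsc]; simp [Matrix.one_apply]
    have hc11 : M l₀ 1 1 = c := by rw [hsc]; simp [Matrix.one_apply]
    have hc01 : M l₀ 0 1 = 0 := by rw [hsc]; simp [Matrix.one_apply]
    have hc10 : M l₀ 1 0 = 0 := by rw [hsc]; simp [Matrix.one_apply]
    have hU' : star (M l₀) * M l₀ = 1 := Matrix.mem_unitaryGroup_iff'.mp (hU l₀ hl₀)
    have hcc : (starRingEnd ℂ) c * c = 1 := by
      have h2 : (star (M l₀) * M l₀) 0 0 = (1 : Matrix (Fin 2) (Fin 2) ℂ) 0 0 := by rw [hU']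
      simpa [Matrix.mul_apply, Fin.sum_univ_two, Matrix.star_eq_conjTranspose,
        Matrix.conjTranspose_apply, Complex.star_def, hc00, hc10] using h2
    have hcne : (starRingEnd ℂ) c ≠ 0 := by
      intro h; rw [h, zero_mul] at hcc; exact one_ne_zero hcc.symm
    -- derivative of unitarity relations
    have hDrel : ∀ i j : Fin 2,
        (starRingEnd ℂ) (deriv (fun s => M s 0 i) l₀) * M l₀ 0 j +
          (starRingEnd ℂ) (M l₀ 0 i) * deriv (fun s => M s 0 j) l₀ +
        ((starRingEnd ℂ) (deriv (fun s => M s 1 i) l₀) * M l₀ 1 j +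
          (starRingEnd ℂ) (M l₀ 1 i) * deriv (fun s => M s 1 j) l₀) = 0 := by
      intro i j
      have hφ : (fun t => (starRingEnd ℂ) (M t 0 i) * M t 0 j +
          (starRingEnd ℂ) (M t 1 i) * M t 1 j) =ᶠ[nhds l₀]
          (fun _ => (1 : Matrix (Fin 2) (Fin 2) ℂ) i j) := by
        filter_upwards [hγn] with t ht
        have h2 : (star (M t) * M t) i j = (1 : Matrix (Fin 2) (Fin 2) ℂ) i j := by
          rw [Matrix.mem_unitaryGroup_iff'.mp (hU t ht)]
        simpa [Matrix.mul_apply, Fin.sum_univ_two, Matrix.star_eq_conjTranspose,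
          Matrix.conjTranspose_apply, Complex.star_def] using h2
      have H0i : HasDerivAt (fun s => M s 0 i) (deriv (fun s => M s 0 i) l₀) l₀ :=
        (hm 0 i).differentiableAt.hasDerivAt
      have H0j : HasDerivAt (fun s => M s 0 j) (deriv (fun s => M s 0 j) l₀) l₀ :=
        (hm 0 j).differentiableAt.hasDerivAt
      have H1i : HasDerivAt (fun s => M s 1 i) (deriv (fun s => M s 1 i) l₀) l₀ :=
        (hm 1 i).differentiableAt.hasDerivAt
      have H1j : HasDerivAt (fun s => M s 1 j) (deriv (fun s => M s 1 j) l₀) l₀ :=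
        (hm 1 j).differentiableAt.hasDerivAt
      have HD := ((hasDerivAt_conj H0i).fun_mul H0j).fun_add ((hasDerivAt_conj H1i).fun_mul H1j)
      have hc := hφ.deriv_eq
      rw [HD.deriv, deriv_const] at hc
      exact hc
    have f1 := hDrel 0 0
    have f2 := hDrel 1 1
    have f3 := hDrel 0 1
    rw [hc00, hc10] at f1
    rw [hc01, hc11] at f2
    rw [hc00, hc01, hc10, hc11] at f3
    simp only [map_zero, mul_zero, zero_mul, add_zero, zero_add] at f1 f2 f3
    have f4 : (deriv (fun s => M s 0 0) l₀ - deriv (fun s => M s 1 1) l₀) *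
        (deriv (fun s => M s 0 0) l₀ - deriv (fun s => M s 1 1) l₀) +
        4 * (deriv (fun s => M s 0 1) l₀ * deriv (fun s => M s 1 0) l₀) = 0 := by
      rw [← hkey, h1]; ring
    obtain ⟨hx, hy, hz⟩ := skew_alg
      (x := (starRingEnd ℂ) c * (deriv (fun s => M s 0 0) l₀ - deriv (fun s => M s 1 1) l₀))
      (y := (starRingEnd ℂ) c * deriv (fun s => M s 0 1) l₀)
      (z := (starRingEnd ℂ) c * deriv (fun s => M s 1 0) l₀)
      (by simp only [_root_.map_mul, map_sub, Complex.conj_conj]; linear_combination f1 - f2)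
      (by
        have f3' := congrArg (starRingEnd ℂ) f3
        simp only [map_add, _root_.map_mul, Complex.conj_conj, map_zero] at f3'
        simp only [_root_.map_mul, Complex.conj_conj]
        linear_combination f3')
      (by linear_combination ((starRingEnd ℂ) c * (starRingEnd ℂ) c) * f4)
    have e01 : deriv (fun s => M s 0 1) l₀ = 0 := by
      rcases mul_eq_zero.mp hy with h | h
      · exact absurd h hcne
      · exact h
    have e10 : deriv (fun s => M s 1 0) l₀ = 0 := by
      rcases mul_eq_zero.mp hz with h | h
      · exact absurd h hcne
      · exact h
    have e0011 : deriv (fun s => M s 0 0) l₀ = deriv (fun s => M s 1 1) l₀ := by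
      rcases mul_eq_zero.mp hx with h | h
      · exact absurd h hcne
      · exact sub_eq_zero.mp h
    have htrv : Matrix.trace (matDeriv M l₀) =
        deriv (fun s => M s 0 0) l₀ + deriv (fun s => M s 1 1) l₀ := by
      simp [matDeriv, Matrix.trace_fin_two]
    rw [htrv]
    ext i j
    fin_cases i <;> fin_cases j <;>
      simp [matDeriv, Matrix.one_apply, e01, e10, e0011] <;> ring_nf
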